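/- Let p_0, p_1, ..., p_k and q_0, q_1, ..., q_k be two sequences of probability mass functions on finite sets Z_0, Z_1, ..., Z_k such that for each i ≥ 1 there is a shared CPT P_i from Z_{i-1} to Z_i with p_i(z) = Σ_{z'} p_{i-1}(z') (P_i)_{z'}(z) and q_i(z) = Σ_{z'} q_{i-1}(z') (P_i)_{z'}(z). Then d_V(p_k, q_k) ≤ (∏_{i=1}^k d⁺(P_i)) · d_V(p_0, q_0). -/
import Mathlib


noncomputable def dV {Z : Type*} [Fintype Z] (p q : Z → ℝ) : ℝ :=
  (1/2) * ∑ z, |p z - q z|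

def IsPMF {Z : Type*} [Fintype Z] (p : Z → ℝ) : Prop :=
  (∀ z, 0 ≤ p z) ∧ ∑ z, p z = 1

noncomputable def diam {X Y : Type*} [Fintype X] [Fintype Y]
    (P : X → Y → ℝ) : ℝ :=
  ⨆ x : X, ⨆ x' : X, dV (P x) (P x')

lemma dV_nonneg {Z : Type*} [Fintype Z] (p q : Z → ℝ) : 0 ≤ dV p q := by
  unfold dV; positivity

lemma dV_self {Z : Type*} [Fintype Z] (p : Z → ℝ) : dV p p = 0 := by
  simp [dV]

lemma dV_le_diam {X Y : Type*} [Fintype X] [Fintype Y] (P : X → Y → ℝ)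
    (x x' : X) : dV (P x) (P x') ≤ diam P := by
  have h1 : dV (P x) (P x') ≤ ⨆ x'' : X, dV (P x) (P x'') :=
    le_ciSup (Set.Finite.bddAbove (Set.finite_range fun x'' => dV (P x) (P x''))) x'
  have h2 : (⨆ x'' : X, dV (P x) (P x'')) ≤ diam P :=
    le_ciSup (Set.Finite.bddAbove
      (Set.finite_range fun x0 => ⨆ x'' : X, dV (P x0) (P x''))) x
  exact h1.trans h2

lemma diam_nonneg {X Y : Type*} [Fintype X] [Fintype Y] [Nonempty X]
    (P : X → Y → ℝ) : 0 ≤ diam P := by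
  obtain ⟨x⟩ := ‹Nonempty X›
  calc (0:ℝ) = dV (P x) (P x) := (dV_self _).symm
    _ ≤ diam P := dV_le_diam P x x

lemma step_lemma {X Y : Type*} [Fintype X] [Fintype Y] [Nonempty X]
    (p q : X → ℝ) (P : X → Y → ℝ) (hP : ∀ x, IsPMF (P x))
    (hs : ∑ x, p x = ∑ x, q x) :
    dV (fun y => ∑ x, p x * P x y) (fun y => ∑ x, q x * P x y)
      ≤ diam P * dV p q := by
  set S := dV p q with hS
  have hS0 : 0 ≤ S := dV_nonneg p q
  set a : X → ℝ := fun x => max (p x - q x) 0 with ha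
  set b : X → ℝ := fun x => max (q x - p x) 0 with hb
  have ha0 : ∀ x, 0 ≤ a x := fun x => le_max_right _ _
  have hb0 : ∀ x, 0 ≤ b x := fun x => le_max_right _ _
  have hab : ∀ x, a x - b x = p x - q x := by
    intro x; simp only [ha, hb]
    rcases le_total (p x) (q x) with h | h
    · rw [max_eq_right (by linarith : p x - q x ≤ 0),
        max_eq_left (by linarith : (0:ℝ) ≤ q x - p x)]; ring
    · rw [max_eq_left (by linarith : (0:ℝ) ≤ p x - q x),
        max_eq_right (by linarith : q x - p x ≤ 0)]; ring
  have habs : ∀ x, a x + b x = |p x - q x| := by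
    intro x; simp only [ha, hb]
    rcases le_total (p x) (q x) with h | h
    · rw [max_eq_right (by linarith : p x - q x ≤ 0),
        max_eq_left (by linarith : (0:ℝ) ≤ q x - p x),
        abs_of_nonpos (by linarith)]; ring
    · rw [max_eq_left (by linarith : (0:ℝ) ≤ p x - q x),
        max_eq_right (by linarith : q x - p x ≤ 0),
        abs_of_nonneg (by linarith)]; ring
  have hsum0 : ∑ x, (p x - q x) = 0 := by
    rw [Finset.sum_sub_distrib, hs, sub_self]
  have h1 : (∑ x, a x) - (∑ x, b x) = 0 := by
    rw [← Finset.sum_sub_distrib, Finset.sum_congr rfl fun x _ => hab x]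
    exact hsum0
  have h2 : (∑ x, a x) + (∑ x, b x) = 2 * S := by
    rw [← Finset.sum_add_distrib, Finset.sum_congr rfl fun x _ => habs x, hS]
    unfold dV; ring
  have hsa : ∑ x, a x = S := by linarith
  have hsb : ∑ x, b x = S := by linarith
  have key : ∀ y, S * (∑ x, (p x - q x) * P x y)
      = ∑ x, ∑ x', a x * b x' * (P x y - P x' y) := by
    intro y
    have e1 : ∑ x, ∑ x', a x * b x' * (P x y - P x' y)
        = (∑ x, a x * P x y) * (∑ x, b x)
          - (∑ x, a x) * (∑ x, b x * P x y) := by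
      rw [Finset.sum_mul_sum, Finset.sum_mul_sum, ← Finset.sum_sub_distrib]
      refine Finset.sum_congr rfl fun x _ => ?_
      rw [← Finset.sum_sub_distrib]
      exact Finset.sum_congr rfl fun x' _ => by ring
    have e2 : ∑ x, (p x - q x) * P x y
        = (∑ x, a x * P x y) - (∑ x, b x * P x y) := by
      rw [← Finset.sum_sub_distrib]
      refine Finset.sum_congr rfl fun x _ => ?_
      rw [← hab x]; ring
    rw [e1, hsa, hsb, e2]; ring
  have main : S * dV (fun y => ∑ x, p x * P x y) (fun y => ∑ x, q x * P x y)
      ≤ S * (diam P * S) := by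
    have lhs_eq : S * dV (fun y => ∑ x, p x * P x y) (fun y => ∑ x, q x * P x y)
        = (1/2) * ∑ y, |S * ∑ x, (p x - q x) * P x y| := by
      simp only [dV]
      rw [← mul_assoc, mul_comm S (1/2:ℝ), mul_assoc]
      congr 1
      rw [Finset.mul_sum]
      refine Finset.sum_congr rfl fun y _ => ?_
      rw [abs_mul, abs_of_nonneg hS0]
      congr 1
      rw [← Finset.sum_sub_distrib]
      congr 1
      exact Finset.sum_congr rfl fun x _ => by ring
    rw [lhs_eq]
    have step1 : (1/2:ℝ) * ∑ y, |S * ∑ x, (p x - q x) * P x y|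
        ≤ (1/2) * ∑ y, ∑ x, ∑ x', a x * b x' * |P x y - P x' y| := by
      refine mul_le_mul_of_nonneg_left ?_ (by norm_num)
      refine Finset.sum_le_sum fun y _ => ?_
      rw [key y]
      refine le_trans (Finset.abs_sum_le_sum_abs _ _) ?_
      refine Finset.sum_le_sum fun x _ => ?_
      refine le_trans (Finset.abs_sum_le_sum_abs _ _) ?_
      refine Finset.sum_le_sum fun x' _ => ?_
      rw [abs_mul, abs_of_nonneg (mul_nonneg (ha0 x) (hb0 x'))]
    refine le_trans step1 ?_
    have swap1 : ∑ y, ∑ x, ∑ x', a x * b x' * |P x y - P x' y|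
        = ∑ x, ∑ x', a x * b x' * ∑ y, |P x y - P x' y| := by
      rw [Finset.sum_comm]
      refine Finset.sum_congr rfl fun x _ => ?_
      rw [Finset.sum_comm]
      refine Finset.sum_congr rfl fun x' _ => ?_
      rw [Finset.mul_sum]
    have swap2 : (1/2:ℝ) * ∑ y, ∑ x, ∑ x', a x * b x' * |P x y - P x' y|
        = ∑ x, ∑ x', a x * b x' * dV (P x) (P x') := by
      rw [swap1, Finset.mul_sum]
      refine Finset.sum_congr rfl fun x _ => ?_
      rw [Finset.mul_sum]
      refine Finset.sum_congr rfl fun x' _ => ?_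
      unfold dV; ring
    rw [swap2]
    have bound : ∑ x, ∑ x', a x * b x' * dV (P x) (P x')
        ≤ ∑ x, ∑ x', a x * b x' * diam P := by
      refine Finset.sum_le_sum fun x _ => Finset.sum_le_sum fun x' _ => ?_
      exact mul_le_mul_of_nonneg_left (dV_le_diam P x x')
        (mul_nonneg (ha0 x) (hb0 x'))
    refine le_trans bound (le_of_eq ?_)
    have e3 : ∑ x, ∑ x', a x * b x' * diam P
        = ((∑ x, a x) * (∑ x, b x)) * diam P := by
      rw [Finset.sum_mul_sum, Finset.sum_mul]
      refine Finset.sum_congr rfl fun x _ => ?_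
      rw [Finset.sum_mul]
    rw [e3, hsa, hsb]; ring
  rcases eq_or_lt_of_le hS0 with h | h
  · have h0 : dV p q = 0 := by rw [← hS, ← h]
    have hsz : ∑ x, |p x - q x| = 0 := by
      unfold dV at h0; linarith
    have hpq : ∀ x, p x = q x := by
      intro x
      have h3 := (Finset.sum_eq_zero_iff_of_nonneg
        (fun x _ => abs_nonneg (p x - q x))).mp hsz x (Finset.mem_univ x)
      have h4 := abs_eq_zero.mp h3
      linarith
    have heq : (fun y => ∑ x, p x * P x y) = (fun y => ∑ x, q x * P x y) := by
      funext y; exact Finset.sum_congr rfl fun x _ => by rw [hpq x]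
    rw [heq, dV_self, ← h, mul_zero]
  · exact le_of_mul_le_mul_left main h

theorem stmt10 (k : ℕ) (Z : ℕ → Type*) [∀ i, Fintype (Z i)] [∀ i, Nonempty (Z i)]
    (p q : (i : ℕ) → Z i → ℝ)
    (P : (i : ℕ) → Z i → Z (i + 1) → ℝ)
    (hP : ∀ i z, IsPMF (P i z))
    (hp0 : IsPMF (p 0)) (hq0 : IsPMF (q 0))
    (hp : ∀ i, p (i + 1) = fun z => ∑ z', p i z' * P i z' z)
    (hq : ∀ i, q (i + 1) = fun z => ∑ z', q i z' * P i z' z) :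
    dV (p k) (q k) ≤ (∏ i ∈ Finset.range k, diam (P i)) * dV (p 0) (q 0) := by
  have sums : ∀ i, ∑ z, p i z = ∑ z, q i z := by
    intro i
    induction i with
    | zero => rw [hp0.2, hq0.2]
    | succ n ih =>
      rw [hp n, hq n]
      have e : ∀ (r : Z n → ℝ), ∑ z, ∑ z', r z' * P n z' z = ∑ z', r z' := by
        intro r
        rw [Finset.sum_comm]
        refine Finset.sum_congr rfl fun z' _ => ?_
        rw [← Finset.mul_sum, (hP n z').2, mul_one]
      simp only []
      rw [e (p n), e (q n), ih]
  induction k with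
  | zero => simp
  | succ n ih =>
    rw [hp n, hq n]
    calc dV (fun z => ∑ z', p n z' * P n z' z) (fun z => ∑ z', q n z' * P n z' z)
        ≤ diam (P n) * dV (p n) (q n) :=
          step_lemma (p n) (q n) (P n) (hP n) (sums n)
      _ ≤ diam (P n) * ((∏ i ∈ Finset.range n, diam (P i)) * dV (p 0) (q 0)) :=
          mul_le_mul_of_nonneg_left ih (diam_nonneg (P n))
      _ = (∏ i ∈ Finset.range (n + 1), diam (P i)) * dV (p 0) (q 0) := by
          rw [Finset.prod_range_succ]; ring
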